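/- For any finite abstract simplicial complex G, the connection matrix L' = 1 + A' applied to the vector K⁺ with K⁺(x) = (-1)^{dim(x)}(1 - χ(S(x))) gives the constant vector 1; equivalently, Σ_y g(x,y) = (-1)^{dim(x)} g(x,x) for every face x, where g = (L')^{-1}. -/

import Mathlib

open Finset Matrix

/-- The connection matrix `L' = 1 + A'` of a finite abstract simplicial complex `G`:
`L'_{xy} = 1` iff the faces `x` and `y` intersect (in particular `L'_{xx} = 1`). -/
def connMat {V : Type*} [DecidableEq V] (G : Finset (Finset V)) :
    Matrix G G ℚ := fun x y =>
  if ((x : Finset V) ∩ (y : Finset V)).Nonempty then 1 else 0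

/-- Euler characteristic `χ(G) = ∑_x (-1)^{dim x}` with `dim x = card x - 1`. -/
def eulerChar {V : Type*} [DecidableEq V] (G : Finset (Finset V)) : ℚ :=
  ∑ x ∈ G, (-1 : ℚ) ^ (x.card - 1)

/-- The Euler characteristic of the clique complex of the graph on the collection `S`
of faces in which two faces are adjacent iff one strictly contains the other:
cliques are the nonempty chains in `S`. -/
def chainChi {V : Type*} [DecidableEq V] (S : Finset (Finset V)) : ℚ :=
  ∑ c ∈ S.powerset.filter
      (fun c => c.Nonempty ∧ ∀ y ∈ c, ∀ z ∈ c, y ⊆ z ∨ z ⊆ y),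
    (-1 : ℚ) ^ (c.card - 1)

/-- The Euler characteristic of the unit sphere `S(x)` of the face `x` in the
barycentric refinement graph `G₁` (neighbors of `x`: faces comparable to `x`). -/
def sphereChi {V : Type*} [DecidableEq V] (G : Finset (Finset V)) (x : Finset V) : ℚ :=
  chainChi (G.filter (fun y => y ⊂ x ∨ x ⊂ y))

/-- The unstable curvature `K⁺(x) = (-1)^{dim x} (1 - χ(S(x)))`. -/
def Kplus {V : Type*} [DecidableEq V] (G : Finset (Finset V)) (x : Finset V) : ℚ :=
  (-1 : ℚ) ^ (x.card - 1) * (1 - sphereChi G x)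


namespace KnillAux
variable {V : Type*} [DecidableEq V]

def chains (A : Finset (Finset V)) : Finset (Finset (Finset V)) :=
  A.powerset.filter (fun c => ∀ y ∈ c, ∀ z ∈ c, y ⊆ z ∨ z ⊆ y)

def T (A : Finset (Finset V)) : ℚ := ∑ c ∈ chains A, (-1 : ℚ) ^ c.card

lemma mem_chains {A : Finset (Finset V)} {c : Finset (Finset V)} :
    c ∈ chains A ↔ c ⊆ A ∧ ∀ y ∈ c, ∀ z ∈ c, y ⊆ z ∨ z ⊆ y := by
  simp [chains]

lemma chain_sup_mem {c : Finset (Finset V)} (hne : c.Nonempty)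
    (hc : ∀ y ∈ c, ∀ z ∈ c, y ⊆ z ∨ z ⊆ y) :
    c.sup id ∈ c ∧ ∀ y ∈ c, y ⊆ c.sup id := by
  obtain ⟨m, hm, hmax'⟩ := Finset.exists_maximal hne
  have hmax : ∀ y ∈ c, ¬ m ⊂ y := fun y hy h =>
    ssubset_irrefl m (h.trans_subset (hmax' hy h.subset))
  have hmx : ∀ y ∈ c, y ⊆ m := by
    intro y hy
    rcases hc y hy m hm with h | h
    · exact h
    · rcases eq_or_ssubset_of_subset h with h' | h'
      · exact h'.ge
      · exact absurd h' (hmax y hy)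
  have : c.sup id = m := le_antisymm (Finset.sup_le fun y hy => hmx y hy)
    (Finset.le_sup (f := id) hm)
  rw [this]; exact ⟨hm, hmx⟩

/-- Split-by-maximum recursion for `T`. -/
lemma T_rec (A : Finset (Finset V)) :
    T A = 1 + ∑ m ∈ A, -(T (A.filter (fun w => w ⊂ m))) := by
  have h0 : (∅ : Finset (Finset V)) ∈ chains A := by simp [mem_chains]
  have := Finset.add_sum_erase (chains A) (fun c => (-1 : ℚ) ^ c.card) h0
  rw [T, ← this]
  simp only [Finset.card_empty, pow_zero]
  congr 1
  -- now: ∑ c ∈ (chains A).erase ∅, (-1)^c.card = ∑ m ∈ A, -(T (below m))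
  have : ∀ m ∈ A, -(T (A.filter (fun w => w ⊂ m)))
      = ∑ c ∈ chains (A.filter (fun w => w ⊂ m)), -((-1:ℚ) ^ c.card) := by
    intro m _; rw [T, Finset.sum_neg_distrib]
  rw [Finset.sum_congr rfl this]
  rw [Finset.sum_sigma' A (fun m => chains (A.filter (fun w => w ⊂ m)))
    (fun _ c => -((-1:ℚ) ^ c.card))]
  refine (Finset.sum_nbij' (fun c => (⟨c.sup id, c.erase (c.sup id)⟩ :
      Σ _ : Finset V, Finset (Finset V)))
      (fun p => insert p.1 p.2) ?_ ?_ ?_ ?_ ?_)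
  · -- maps into sigma
    rintro c hc
    rw [Finset.mem_erase] at hc
    obtain ⟨hcne, hcA⟩ := hc
    rw [mem_chains] at hcA
    obtain ⟨hsub, hch⟩ := hcA
    have hne : c.Nonempty := Finset.nonempty_iff_ne_empty.2 hcne
    obtain ⟨hmem, hmax⟩ := chain_sup_mem hne hch
    rw [Finset.mem_sigma]
    constructor
    · exact hsub hmem
    · rw [mem_chains]
      constructor
      · intro y hy
        rw [Finset.mem_erase] at hy
        rw [Finset.mem_filter]
        exact ⟨hsub hy.2, Finset.ssubset_iff_subset_ne.2 ⟨hmax y hy.2, hy.1⟩⟩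
      · intro y hy z hz
        exact hch y (Finset.mem_of_mem_erase hy) z (Finset.mem_of_mem_erase hz)
  · -- j maps into erase ∅
    rintro ⟨m, c⟩ hp
    rw [Finset.mem_sigma] at hp
    obtain ⟨hm, hc⟩ := hp
    rw [mem_chains] at hc
    rw [Finset.mem_erase, mem_chains]
    refine ⟨by simp, ?_, ?_⟩
    · intro y hy
      rcases Finset.mem_insert.1 hy with rfl | hy
      · exact hm
      · exact (Finset.mem_filter.1 (hc.1 hy)).1
    · intro y hy z hz
      have key : ∀ w ∈ insert m c, w ⊆ m := by
        intro w hw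
        rcases Finset.mem_insert.1 hw with rfl | hw
        · exact Finset.Subset.refl _
        · exact ((Finset.mem_filter.1 (hc.1 hw)).2).subset
      rcases Finset.mem_insert.1 hy with rfl | hy'
      · exact Or.inr (key z hz)
      · rcases Finset.mem_insert.1 hz with rfl | hz'
        · exact Or.inl (key y hy)
        · exact hc.2 y hy' z hz'
  · -- left inverse : j (i c) = c
    rintro c hc
    rw [Finset.mem_erase] at hc
    obtain ⟨hcne, hcA⟩ := hc
    rw [mem_chains] at hcA
    obtain ⟨hmem, _⟩ := chain_sup_mem (Finset.nonempty_iff_ne_empty.2 hcne) hcA.2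
    exact Finset.insert_erase hmem
  · -- right inverse : i (j p) = p
    rintro ⟨m, c⟩ hp
    rw [Finset.mem_sigma] at hp
    obtain ⟨hm, hc⟩ := hp
    rw [mem_chains] at hc
    have hmnotin : m ∉ c := by
      intro h
      exact (Finset.mem_filter.1 (hc.1 h)).2.ne rfl
    have hsup : (insert m c).sup id = m := by
      apply le_antisymm
      · apply Finset.sup_le
        intro y hy
        rcases Finset.mem_insert.1 hy with rfl | hy
        · exact Finset.Subset.refl _
        · exact ((Finset.mem_filter.1 (hc.1 hy)).2).subset
      · exact Finset.le_sup (f := id) (Finset.mem_insert_self m c)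
    ext : 1 <;> simp [hsup, Finset.erase_insert hmnotin]
  · -- values agree
    rintro c hc
    rw [Finset.mem_erase] at hc
    obtain ⟨hcne, hcA⟩ := hc
    rw [mem_chains] at hcA
    obtain ⟨hmem, _⟩ := chain_sup_mem (Finset.nonempty_iff_ne_empty.2 hcne) hcA.2
    have : (c.erase (c.sup id)).card + 1 = c.card := by
      rw [Finset.card_erase_of_mem hmem]
      exact Nat.succ_pred_eq_of_pos (Finset.card_pos.2 ⟨_, hmem⟩)
    rw [← this]
    ring


lemma sum_powerset_q (x : Finset V) :
    (∑ m ∈ x.powerset, (-1 : ℚ) ^ m.card) = if x = ∅ then 1 else 0 := by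
  have h := Finset.sum_powerset_neg_one_pow_card (x := x)
  have h2 : ((∑ m ∈ x.powerset, (-1 : ℤ) ^ m.card : ℤ) : ℚ)
      = ∑ m ∈ x.powerset, (-1 : ℚ) ^ m.card := by push_cast; rfl
  rw [← h2, h]
  split <;> norm_num

/-- Alternating sum over the interval `[w, x]`. -/
lemma sum_Icc_q {w x : Finset V} (hw : w ⊆ x) :
    ∑ z ∈ x.powerset.filter (fun z => w ⊆ z), (-1 : ℚ) ^ z.card
      = if w = x then (-1 : ℚ) ^ x.card else 0 := by
  have key : ∑ z ∈ x.powerset.filter (fun z => w ⊆ z), (-1 : ℚ) ^ z.card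
      = ∑ s ∈ (x \ w).powerset, (-1 : ℚ) ^ s.card * (-1 : ℚ) ^ w.card := by
    refine Finset.sum_nbij' (fun z => z \ w) (fun s => s ∪ w) ?_ ?_ ?_ ?_ ?_
    · intro z hz
      rw [Finset.mem_filter, Finset.mem_powerset] at hz
      rw [Finset.mem_powerset]
      exact Finset.sdiff_subset_sdiff hz.1 (Finset.Subset.refl _)
    · intro s hs
      rw [Finset.mem_powerset] at hs
      rw [Finset.mem_filter, Finset.mem_powerset]
      exact ⟨Finset.union_subset (hs.trans (Finset.sdiff_subset)) hw,
        Finset.subset_union_right⟩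
    · intro z hz
      rw [Finset.mem_filter] at hz
      exact Finset.sdiff_union_of_subset hz.2
    · intro s hs
      rw [Finset.mem_powerset] at hs
      have hd : Disjoint s w := Finset.disjoint_of_subset_left hs Finset.sdiff_disjoint
      show (s ∪ w) \ w = s
      rw [Finset.union_sdiff_right, Finset.sdiff_eq_self_of_disjoint hd]
    · intro z hz
      rw [Finset.mem_filter] at hz
      rw [← pow_add, Finset.card_sdiff_add_card_eq_card hz.2]
  rw [key, ← Finset.sum_mul, sum_powerset_q]
  have hiff : x \ w = ∅ ↔ w = x := by
    rw [Finset.sdiff_eq_empty_iff_subset]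
    exact ⟨fun h => Finset.Subset.antisymm hw h, fun h => h.ge⟩
  by_cases h : w = x
  · rw [if_pos (hiff.2 h), if_pos h, h, one_mul]
  · rw [if_neg (fun he => h (hiff.1 he)), if_neg h, zero_mul]



/-- Alternating chain sum over an open interval `(y, m)` in the subset order. -/
lemma T_Ioo : ∀ (n : ℕ) (y m : Finset V), m.card ≤ n → y ⊂ m →
    T (m.powerset.filter (fun w => y ⊂ w ∧ w ⊂ m))
      = -((-1 : ℚ) ^ m.card * (-1 : ℚ) ^ y.card) := by
  intro n
  induction n with
  | zero =>
    intro y m hc hym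
    exfalso
    have : y.card < m.card := Finset.card_lt_card hym
    omega
  | succ n ih =>
    intro y m hc hym
    set A := m.powerset.filter (fun w => y ⊂ w ∧ w ⊂ m) with hA
    have hfil : ∀ m' ∈ A, A.filter (fun w => w ⊂ m')
        = m'.powerset.filter (fun w => y ⊂ w ∧ w ⊂ m') := by
      intro m' hm'
      rw [hA, Finset.mem_filter, Finset.mem_powerset] at hm'
      ext w
      simp only [hA, Finset.mem_filter, Finset.mem_powerset]
      constructor
      · rintro ⟨⟨_, hyw, _⟩, hwm'⟩
        exact ⟨hwm'.subset, hyw, hwm'⟩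
      · rintro ⟨hwm', hyw, hwm''⟩
        exact ⟨⟨hwm'.trans hm'.1, hyw, hwm''.trans_subset hm'.1⟩, hwm''⟩
    have hTsub : ∀ m' ∈ A, -(T (A.filter (fun w => w ⊂ m')))
        = (-1 : ℚ) ^ m'.card * (-1 : ℚ) ^ y.card := by
      intro m' hm'
      have hm2 := hm'
      rw [hA, Finset.mem_filter] at hm2
      have hcard : m'.card ≤ n := by
        have := Finset.card_lt_card hm2.2.2
        omega
      rw [hfil m' hm', ih y m' hcard hm2.2.1, neg_neg]
    rw [T_rec, Finset.sum_congr rfl hTsub]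
    -- compute ∑_{m' ∈ A} (-1)^card m' * (-1)^card y
    have hsplit : A = ((m.powerset.filter (fun w => y ⊆ w)).erase m).erase y := by
      ext w
      simp only [hA, Finset.mem_erase, Finset.mem_filter, Finset.mem_powerset]
      constructor
      · rintro ⟨hwm, hyw, hwm'⟩
        exact ⟨hyw.ne', ⟨hwm'.ne, hwm, hyw.subset⟩⟩
      · rintro ⟨hwy, hwm, hwsub, hysub⟩
        exact ⟨hwsub, Finset.ssubset_iff_subset_ne.2 ⟨hysub, Ne.symm hwy⟩,
          Finset.ssubset_iff_subset_ne.2 ⟨hwsub, hwm⟩⟩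
    have hyB : y ∈ (m.powerset.filter (fun w => y ⊆ w)).erase m := by
      rw [Finset.mem_erase, Finset.mem_filter, Finset.mem_powerset]
      exact ⟨hym.ne, hym.subset, Finset.Subset.refl _⟩
    have hmB : m ∈ m.powerset.filter (fun w => y ⊆ w) := by
      rw [Finset.mem_filter, Finset.mem_powerset]
      exact ⟨Finset.Subset.refl _, hym.subset⟩
    have hsum0 : ∑ w ∈ m.powerset.filter (fun w => y ⊆ w), (-1 : ℚ) ^ w.card = 0 := by
      rw [sum_Icc_q hym.subset, if_neg hym.ne]
    have e1 := Finset.add_sum_erase _ (fun w => (-1 : ℚ) ^ w.card) hmB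
    have e2 := Finset.add_sum_erase _ (fun w => (-1 : ℚ) ^ w.card) hyB
    have hsumA : ∑ w ∈ A, (-1 : ℚ) ^ w.card
        = -((-1 : ℚ) ^ m.card) - (-1 : ℚ) ^ y.card := by
      rw [hsplit]
      linarith
    calc 1 + ∑ m' ∈ A, (-1 : ℚ) ^ m'.card * (-1 : ℚ) ^ y.card
        = 1 + (∑ m' ∈ A, (-1 : ℚ) ^ m'.card) * (-1 : ℚ) ^ y.card := by
          rw [Finset.sum_mul]
      _ = -((-1 : ℚ) ^ m.card * (-1 : ℚ) ^ y.card) := by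
          rw [hsumA]
          have h1 : ((-1 : ℚ) ^ y.card) * ((-1 : ℚ) ^ y.card) = 1 := by
            rw [← pow_add, ← two_mul, pow_mul]; norm_num
          linear_combination -h1

/-- `T` of a join: chains in `A ∪ B` when every element of `A` is strictly
below every element of `B`. -/
lemma T_union {A B : Finset (Finset V)} (hd : ∀ a ∈ A, a ∉ B)
    (hab : ∀ a ∈ A, ∀ b ∈ B, a ⊂ b) :
    T (A ∪ B) = T A * T B := by
  have hfu : ∀ c ∈ chains (A ∪ B),
      c.filter (fun w => w ∈ A) ∪ c.filter (fun w => w ∈ B) = c := by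
    intro c hc
    rw [mem_chains] at hc
    rw [← Finset.filter_or, Finset.filter_true_of_mem]
    intro w hw
    exact Finset.mem_union.1 (hc.1 hw)
  rw [T, T, T, Finset.sum_mul_sum, ← Finset.sum_product']
  refine Finset.sum_nbij'
      (i := fun c => (c.filter (fun w => w ∈ A), c.filter (fun w => w ∈ B)))
      (j := fun p => p.1 ∪ p.2) ?_ ?_ ?_ ?_ ?_
  · intro c hc
    have hc' := hc
    rw [mem_chains] at hc'
    rw [Finset.mem_product, mem_chains, mem_chains]
    refine ⟨⟨fun w hw => (Finset.mem_filter.1 hw).2, ?_⟩,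
      fun w hw => (Finset.mem_filter.1 hw).2, ?_⟩ <;>
    · intro w hw z hz
      exact hc'.2 w (Finset.mem_of_mem_filter _ hw) z (Finset.mem_of_mem_filter _ hz)
  · rintro ⟨a, b⟩ hp
    rw [Finset.mem_product, mem_chains, mem_chains] at hp
    rw [mem_chains]
    constructor
    · intro w hw
      rcases Finset.mem_union.1 hw with h | h
      · exact Finset.mem_union_left _ (hp.1.1 h)
      · exact Finset.mem_union_right _ (hp.2.1 h)
    · intro w hw z hz
      rcases Finset.mem_union.1 hw with h1 | h1 <;> rcases Finset.mem_union.1 hz with h2 | h2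
      · exact hp.1.2 w h1 z h2
      · exact Or.inl (hab w (hp.1.1 h1) z (hp.2.1 h2)).subset
      · exact Or.inr (hab z (hp.1.1 h2) w (hp.2.1 h1)).subset
      · exact hp.2.2 w h1 z h2
  · intro c hc
    exact hfu c hc
  · rintro ⟨a, b⟩ hp
    rw [Finset.mem_product, mem_chains, mem_chains] at hp
    have hBA : ∀ w ∈ b, w ∉ A := fun w hw hwA => hd w hwA (hp.2.1 hw)
    have hAB : ∀ w ∈ a, w ∉ B := fun w hw => hd w (hp.1.1 hw)
    simp only [Prod.mk.injEq]
    constructor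
    · rw [Finset.filter_union, Finset.filter_true_of_mem (fun w hw => hp.1.1 hw),
        Finset.filter_false_of_mem hBA, Finset.union_empty]
    · rw [Finset.filter_union, Finset.filter_true_of_mem (fun w hw => hp.2.1 hw),
        Finset.filter_false_of_mem hAB, Finset.empty_union]
  · intro c hc
    have hc' := hc
    rw [mem_chains] at hc'
    simp only
    rw [← pow_add]
    congr 1
    have hdisj : Disjoint (c.filter (fun w => w ∈ A)) (c.filter (fun w => w ∈ B)) := by
      rw [Finset.disjoint_left]
      intro w hw hw2
      exact hd w (Finset.mem_filter.1 hw).2 (Finset.mem_filter.1 hw2).2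
    rw [← Finset.card_union_of_disjoint hdisj, hfu c hc]

lemma negpow_pred {s : Finset V} (hs : s.Nonempty) :
    (-1 : ℚ) ^ (s.card - 1) = -(-1 : ℚ) ^ s.card := by
  obtain ⟨k, hk⟩ : ∃ k, s.card = k + 1 :=
    ⟨s.card - 1, (Nat.succ_pred_eq_of_pos (Finset.card_pos.2 hs)).symm⟩
  rw [hk]
  simp [pow_succ]

variable {G : Finset (Finset V)}

section Complex
variable (hne : ∀ x ∈ G, x.Nonempty)
    (hsub : ∀ x ∈ G, ∀ y : Finset V, y ⊆ x → y.Nonempty → y ∈ G)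

include hne hsub

lemma T_down {y : Finset V} (hy : y ∈ G) :
    T (G.filter (fun w => w ⊂ y)) = -((-1 : ℚ) ^ y.card) := by
  have hset : G.filter (fun w => w ⊂ y)
      = y.powerset.filter (fun w => (∅ : Finset V) ⊂ w ∧ w ⊂ y) := by
    ext w
    simp only [Finset.mem_filter, Finset.mem_powerset]
    constructor
    · rintro ⟨hwG, hwy⟩
      exact ⟨hwy.subset, Finset.empty_ssubset.2 (hne w hwG), hwy⟩
    · rintro ⟨hwy, hw0, hwy'⟩
      exact ⟨hsub y hy w hwy (Finset.empty_ssubset.1 hw0), hwy'⟩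
  have h0y : (∅ : Finset V) ⊂ y := Finset.empty_ssubset.2 (hne y hy)
  rw [hset, T_Ioo y.card ∅ y le_rfl h0y]
  simp

lemma T_up {y : Finset V} (hy : y ∈ G) :
    T (G.filter (fun w => y ⊂ w))
      = (-1 : ℚ) ^ y.card * ∑ z ∈ G.filter (fun z => y ⊆ z), (-1 : ℚ) ^ z.card := by
  set A := G.filter (fun w => y ⊂ w) with hA
  have hfil : ∀ m ∈ A, A.filter (fun w => w ⊂ m)
      = m.powerset.filter (fun w => y ⊂ w ∧ w ⊂ m) := by
    intro m hm
    rw [hA, Finset.mem_filter] at hm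
    ext w
    simp only [hA, Finset.mem_filter, Finset.mem_powerset]
    constructor
    · rintro ⟨⟨hwG, hyw⟩, hwm⟩
      exact ⟨hwm.subset, hyw, hwm⟩
    · rintro ⟨hwm, hyw, hwm'⟩
      have hwne : w.Nonempty := Finset.Nonempty.mono hyw.subset (hne y hy)
      exact ⟨⟨hsub m hm.1 w hwm hwne, hyw⟩, hwm'⟩
  have hTsub : ∀ m ∈ A, -(T (A.filter (fun w => w ⊂ m)))
      = (-1 : ℚ) ^ m.card * (-1 : ℚ) ^ y.card := by
    intro m hm
    have hm' := hm
    rw [hA, Finset.mem_filter] at hm'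
    rw [hfil m hm, T_Ioo m.card y m le_rfl hm'.2, neg_neg]
  rw [T_rec, Finset.sum_congr rfl hTsub]
  have hsplit : G.filter (fun z => y ⊆ z) = insert y A := by
    ext z
    simp only [hA, Finset.mem_filter, Finset.mem_insert]
    constructor
    · rintro ⟨hzG, hyz⟩
      rcases eq_or_ssubset_of_subset hyz with h | h
      · exact Or.inl h.symm
      · exact Or.inr ⟨hzG, h⟩
    · rintro (rfl | ⟨hzG, hyz⟩)
      · exact ⟨hy, Finset.Subset.refl _⟩
      · exact ⟨hzG, hyz.subset⟩
  have hyA : y ∉ A := by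
    rw [hA, Finset.mem_filter]
    rintro ⟨-, h⟩
    exact h.ne rfl
  rw [hsplit, Finset.sum_insert hyA, mul_add, ← pow_add, ← two_mul, pow_mul]
  rw [Finset.mul_sum]
  norm_num
  rw [Finset.sum_congr rfl (fun m _ => by ring :
    ∀ m ∈ A, (-1:ℚ) ^ m.card * (-1:ℚ) ^ y.card = (-1:ℚ) ^ y.card * (-1:ℚ) ^ m.card)]

lemma chainChi_eq (S : Finset (Finset V)) : chainChi S = 1 - T S := by
  have hsplit := Finset.sum_filter_add_sum_filter_not (chains S)
    (fun c => c.Nonempty) (fun c => (-1 : ℚ) ^ c.card)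
  have hempty : (chains S).filter (fun c => ¬ c.Nonempty) = {∅} := by
    ext c
    simp only [Finset.mem_filter, Finset.mem_singleton, Finset.not_nonempty_iff_eq_empty]
    constructor
    · rintro ⟨-, h⟩; exact h
    · rintro rfl; exact ⟨by simp [mem_chains], rfl⟩
  have hset : S.powerset.filter (fun c => c.Nonempty ∧ ∀ y ∈ c, ∀ z ∈ c, y ⊆ z ∨ z ⊆ y)
      = (chains S).filter (fun c => c.Nonempty) := by
    rw [chains, Finset.filter_filter]
    ext c
    simp only [Finset.mem_filter, Finset.mem_powerset]
    tauto
  rw [chainChi, hset]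
  have hval : ∀ c ∈ (chains S).filter (fun c => c.Nonempty),
      (-1 : ℚ) ^ (c.card - 1) = -(-1 : ℚ) ^ c.card := by
    intro c hc
    exact negpow_pred (Finset.mem_filter.1 hc).2
  rw [Finset.sum_congr rfl hval, Finset.sum_neg_distrib]
  rw [hempty] at hsplit
  simp only [Finset.sum_singleton, Finset.card_empty, pow_zero] at hsplit
  rw [← T] at hsplit
  linarith

/-- The key curvature formula: `K⁺(y) = ω(y) ∑_{z ⊇ y} ω(z)`. -/
lemma Kplus_formula {y : Finset V} (hy : y ∈ G) :
    Kplus G y = (-1 : ℚ) ^ (y.card - 1)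
      * ∑ z ∈ G.filter (fun z => y ⊆ z), (-1 : ℚ) ^ (z.card - 1) := by
  have hS : G.filter (fun w => w ⊂ y ∨ y ⊂ w)
      = G.filter (fun w => w ⊂ y) ∪ G.filter (fun w => y ⊂ w) :=
    Finset.filter_or _ _ _
  have hd : ∀ a ∈ G.filter (fun w => w ⊂ y), a ∉ G.filter (fun w => y ⊂ w) := by
    intro a ha hb
    rw [Finset.mem_filter] at ha hb
    exact (ha.2.trans hb.2).ne rfl
  have hab : ∀ a ∈ G.filter (fun w => w ⊂ y), ∀ b ∈ G.filter (fun w => y ⊂ w), a ⊂ b := by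
    intro a ha b hb
    rw [Finset.mem_filter] at ha hb
    exact ha.2.trans hb.2
  have hT : T (G.filter (fun w => w ⊂ y ∨ y ⊂ w))
      = -(∑ z ∈ G.filter (fun z => y ⊆ z), (-1 : ℚ) ^ z.card) := by
    rw [hS, T_union hd hab, T_down hne hsub hy, T_up hne hsub hy]
    rw [neg_mul, ← mul_assoc, ← pow_add, ← two_mul, pow_mul]
    norm_num
  rw [Kplus, sphereChi, chainChi_eq hne hsub, hT]
  have : ∀ z ∈ G.filter (fun z => y ⊆ z), (-1 : ℚ) ^ (z.card - 1) = -(-1:ℚ) ^ z.card := by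
    intro z hz
    exact negpow_pred (hne z (Finset.mem_filter.1 hz).1)
  rw [Finset.sum_congr rfl this, Finset.sum_neg_distrib]
  ring

end Complex

lemma swap_helper {α β : Type*} [DecidableEq α] [DecidableEq β]
    (A : Finset α) (B : Finset β) (P : α → β → Prop) [∀ y z, Decidable (P y z)]
    (a : α → ℚ) (b : β → ℚ) :
    ∑ y ∈ A, a y * ∑ z ∈ B.filter (fun z => P y z), b z
      = ∑ z ∈ B, (∑ y ∈ A.filter (fun y => P y z), a y) * b z := by
  simp_rw [Finset.sum_filter, Finset.mul_sum, Finset.sum_mul]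
  rw [Finset.sum_comm]
  refine Finset.sum_congr rfl fun z _ => Finset.sum_congr rfl fun y _ => ?_
  split_ifs <;> ring

section Complex2
variable {G : Finset (Finset V)}
variable (hne : ∀ x ∈ G, x.Nonempty)
    (hsub : ∀ x ∈ G, ∀ y : Finset V, y ⊆ x → y.Nonempty → y ∈ G)

include hne hsub

/-- L6 -/
lemma sum_below_inter {z : Finset V} (hz : z ∈ G) (x : Finset V) :
    ∑ y ∈ G.filter (fun y => y ⊆ z ∧ (x ∩ y).Nonempty), (-1 : ℚ) ^ (y.card - 1)
      = if z ⊆ x then 1 else 0 := by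
  have hset : G.filter (fun y => y ⊆ z ∧ (x ∩ y).Nonempty)
      = z.powerset.filter (fun y => (x ∩ y).Nonempty) := by
    ext y
    simp only [Finset.mem_filter, Finset.mem_powerset]
    constructor
    · rintro ⟨-, h1, h2⟩; exact ⟨h1, h2⟩
    · rintro ⟨h1, h2⟩
      have hyne : y.Nonempty := h2.mono Finset.inter_subset_right
      exact ⟨hsub z hz y h1 hyne, h1, h2⟩
  have hval : ∀ y ∈ z.powerset.filter (fun y => (x ∩ y).Nonempty),
      (-1 : ℚ) ^ (y.card - 1) = -(-1 : ℚ) ^ y.card := by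
    intro y hy
    exact negpow_pred ((Finset.mem_filter.1 hy).2.mono Finset.inter_subset_right)
  rw [hset, Finset.sum_congr rfl hval, Finset.sum_neg_distrib]
  have hsplit := Finset.sum_filter_add_sum_filter_not z.powerset
    (fun y => (x ∩ y).Nonempty) (fun y => (-1 : ℚ) ^ y.card)
  rw [sum_powerset_q, if_neg (Finset.nonempty_iff_ne_empty.1 (hne z hz))] at hsplit
  have hnotset : z.powerset.filter (fun y => ¬ (x ∩ y).Nonempty) = (z \ x).powerset := by
    ext y
    simp only [Finset.mem_filter, Finset.mem_powerset, Finset.not_nonempty_iff_eq_empty,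
      ← Finset.disjoint_iff_inter_eq_empty, Finset.subset_sdiff]
    tauto
  rw [hnotset, sum_powerset_q] at hsplit
  have hiff : z \ x = ∅ ↔ z ⊆ x := Finset.sdiff_eq_empty_iff_subset
  by_cases h : z ⊆ x
  · rw [if_pos h]
    rw [if_pos (hiff.2 h)] at hsplit
    linarith
  · rw [if_neg h]
    rw [if_neg (fun he => h (hiff.1 he))] at hsplit
    linarith

/-- L7 -/
lemma sum_below {z : Finset V} (hz : z ∈ G) :
    ∑ y ∈ G.filter (fun y => y ⊆ z), (-1 : ℚ) ^ (y.card - 1) = 1 := by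
  have h := sum_below_inter hne hsub hz z
  rw [if_pos (Finset.Subset.refl z)] at h
  have hset : G.filter (fun y => y ⊆ z) = G.filter (fun y => y ⊆ z ∧ (z ∩ y).Nonempty) := by
    apply Finset.filter_congr
    intro y hy
    have hyne := hne y hy
    constructor
    · intro h1
      exact ⟨h1, by rwa [Finset.inter_eq_right.2 h1]⟩
    · rintro ⟨h1, -⟩; exact h1
  rw [hset]
  exact h

/-- L5G -/
lemma sum_interval {w x : Finset V} (hw : w ∈ G) (hx : x ∈ G) :
    ∑ z ∈ G.filter (fun z => w ⊆ z ∧ z ⊆ x), (-1 : ℚ) ^ (z.card - 1)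
      = if w = x then (-1 : ℚ) ^ (x.card - 1) else 0 := by
  by_cases hwx : w ⊆ x
  · have hset : G.filter (fun z => w ⊆ z ∧ z ⊆ x)
        = x.powerset.filter (fun z => w ⊆ z) := by
      ext z
      simp only [Finset.mem_filter, Finset.mem_powerset]
      constructor
      · rintro ⟨-, h1, h2⟩; exact ⟨h2, h1⟩
      · rintro ⟨h1, h2⟩
        exact ⟨hsub x hx z h1 ((hne w hw).mono h2), h2, h1⟩
    have hval : ∀ z ∈ x.powerset.filter (fun z => w ⊆ z),
        (-1 : ℚ) ^ (z.card - 1) = -(-1 : ℚ) ^ z.card := by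
      intro z hz
      exact negpow_pred ((hne w hw).mono (Finset.mem_filter.1 hz).2)
    rw [hset, Finset.sum_congr rfl hval, Finset.sum_neg_distrib, sum_Icc_q hwx]
    by_cases h : w = x
    · rw [if_pos h, if_pos h, negpow_pred (hne x hx)]
    · rw [if_neg h, if_neg h, neg_zero]
  · have hset : G.filter (fun z => w ⊆ z ∧ z ⊆ x) = ∅ := by
      apply Finset.filter_false_of_mem
      rintro z hz ⟨h1, h2⟩
      exact hwx (h1.trans h2)
    rw [hset, Finset.sum_empty, if_neg (fun h => hwx (h.le))]

end Complex2

lemma omega_sq (s : Finset V) :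
    (-1 : ℚ) ^ (s.card - 1) * (-1 : ℚ) ^ (s.card - 1) = 1 := by
  rw [← pow_add, ← two_mul, pow_mul]; norm_num

theorem connMat_mulVec_Kplus_eq_one' {V : Type*} [DecidableEq V]
    (G : Finset (Finset V))
    (hne : ∀ x ∈ G, x.Nonempty)
    (hsub : ∀ x ∈ G, ∀ y : Finset V, y ⊆ x → y.Nonempty → y ∈ G)
    (hinv : IsUnit (connMat G)) :
    (∀ x : G, ∑ y : G, connMat G x y * Kplus G (y : Finset V) = 1) ∧
    (∀ x : G, ∑ y : G, (connMat G)⁻¹ x y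
        = (-1 : ℚ) ^ ((x : Finset V).card - 1) * (connMat G)⁻¹ x x) := by
  classical
  constructor
  · -- Statement 1
    intro x
    have h0 : ∑ y : G, connMat G x y * Kplus G (y : Finset V)
        = ∑ y ∈ G, (if ((x : Finset V) ∩ y).Nonempty then (1:ℚ) else 0) * Kplus G y := by
      rw [← Finset.sum_coe_sort G
        (fun y => (if ((x : Finset V) ∩ y).Nonempty then (1:ℚ) else 0) * Kplus G y)]
      rfl
    rw [h0]
    have hstep : ∀ y ∈ G,
        (if ((x : Finset V) ∩ y).Nonempty then (1:ℚ) else 0) * Kplus G y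
        = ((if ((x : Finset V) ∩ y).Nonempty then (1:ℚ) else 0) * (-1:ℚ)^(y.card-1)) *
          ∑ z ∈ G.filter (fun z => y ⊆ z), (-1:ℚ)^(z.card-1) := by
      intro y hy
      rw [Kplus_formula hne hsub hy]
      ring
    rw [Finset.sum_congr rfl hstep, swap_helper]
    have hinner : ∀ z ∈ G, (∑ y ∈ G.filter (fun y => y ⊆ z),
        (if ((x : Finset V) ∩ y).Nonempty then (1:ℚ) else 0) * (-1:ℚ)^(y.card-1))
        = if z ⊆ (x : Finset V) then (1:ℚ) else 0 := by
      intro z hz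
      have e1 : ∀ y ∈ G.filter (fun y => y ⊆ z),
          (if ((x : Finset V) ∩ y).Nonempty then (1:ℚ) else 0) * (-1:ℚ)^(y.card-1)
          = if ((x : Finset V) ∩ y).Nonempty then (-1:ℚ)^(y.card-1) else 0 := by
        intro y _; split_ifs <;> ring
      rw [Finset.sum_congr rfl e1, ← Finset.sum_filter, Finset.filter_filter]
      exact sum_below_inter hne hsub hz _
    rw [Finset.sum_congr rfl (fun z hz => by rw [hinner z hz])]
    have e2 : ∀ z ∈ G, (if z ⊆ (x : Finset V) then (1:ℚ) else 0) * (-1:ℚ)^(z.card-1)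
        = if z ⊆ (x : Finset V) then (-1:ℚ)^(z.card-1) else 0 := by
      intro z _; split_ifs <;> ring
    rw [Finset.sum_congr rfl e2, ← Finset.sum_filter]
    exact sum_below hne hsub x.2
  · -- Statement 2
    intro x
    set gm : Matrix G G ℚ := fun x y => (-1:ℚ)^((x : Finset V).card-1) *
        (-1:ℚ)^((y : Finset V).card-1) *
        ∑ z ∈ G.filter (fun z => (x : Finset V) ⊆ z ∧ (y : Finset V) ⊆ z),
          (-1:ℚ)^(z.card-1) with hgm
    have hL : connMat G * gm = 1 := by
      ext a w
      rw [Matrix.mul_apply, Matrix.one_apply]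
      have h0 : ∑ y : G, connMat G a y * gm y w
          = ∑ y ∈ G, (if ((a : Finset V) ∩ y).Nonempty then (1:ℚ) else 0) *
              ((-1:ℚ)^(y.card-1) * (-1:ℚ)^((w : Finset V).card-1) *
              ∑ z ∈ G.filter (fun z => y ⊆ z ∧ (w : Finset V) ⊆ z), (-1:ℚ)^(z.card-1)) := by
        rw [← Finset.sum_coe_sort G
          (fun y => (if ((a : Finset V) ∩ y).Nonempty then (1:ℚ) else 0) *
              ((-1:ℚ)^(y.card-1) * (-1:ℚ)^((w : Finset V).card-1) *
              ∑ z ∈ G.filter (fun z => y ⊆ z ∧ (w : Finset V) ⊆ z), (-1:ℚ)^(z.card-1)))]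
        rfl
      rw [h0]
      have hstep : ∀ y ∈ G,
          (if ((a : Finset V) ∩ y).Nonempty then (1:ℚ) else 0) *
              ((-1:ℚ)^(y.card-1) * (-1:ℚ)^((w : Finset V).card-1) *
              ∑ z ∈ G.filter (fun z => y ⊆ z ∧ (w : Finset V) ⊆ z), (-1:ℚ)^(z.card-1))
          = ((if ((a : Finset V) ∩ y).Nonempty then (1:ℚ) else 0) * (-1:ℚ)^(y.card-1)
              * (-1:ℚ)^((w : Finset V).card-1)) *
              ∑ z ∈ G.filter (fun z => y ⊆ z ∧ (w : Finset V) ⊆ z), (-1:ℚ)^(z.card-1) := by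
        intro y _; ring
      rw [Finset.sum_congr rfl hstep, swap_helper]
      have hinner : ∀ z ∈ G,
          (∑ y ∈ G.filter (fun y => y ⊆ z ∧ (w : Finset V) ⊆ z),
            (if ((a : Finset V) ∩ y).Nonempty then (1:ℚ) else 0) * (-1:ℚ)^(y.card-1)
              * (-1:ℚ)^((w : Finset V).card-1))
          = if ((w : Finset V) ⊆ z ∧ z ⊆ (a : Finset V))
              then (-1:ℚ)^((w : Finset V).card-1) else 0 := by
        intro z hz
        by_cases hwz : (w : Finset V) ⊆ z
        · have hfc : G.filter (fun y => y ⊆ z ∧ (w : Finset V) ⊆ z)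
              = G.filter (fun y => y ⊆ z) :=
            Finset.filter_congr (fun y _ => by tauto)
        
          have e1 : ∀ y ∈ G.filter (fun y => y ⊆ z),
              (if ((a : Finset V) ∩ y).Nonempty then (1:ℚ) else 0) * (-1:ℚ)^(y.card-1)
                * (-1:ℚ)^((w : Finset V).card-1)
              = (if ((a : Finset V) ∩ y).Nonempty then (-1:ℚ)^(y.card-1) else 0)
                * (-1:ℚ)^((w : Finset V).card-1) := by
            intro y _; split_ifs <;> ring
          rw [hfc, Finset.sum_congr rfl e1, ← Finset.sum_mul, ← Finset.sum_filter,
            Finset.filter_filter, sum_below_inter hne hsub hz _]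
          by_cases hza : z ⊆ (a : Finset V)
          · rw [if_pos hza, if_pos ⟨hwz, hza⟩, one_mul]
          · rw [if_neg hza, if_neg (fun h => hza h.2), zero_mul]
        · have hfc : G.filter (fun y => y ⊆ z ∧ (w : Finset V) ⊆ z) = ∅ :=
            Finset.filter_false_of_mem (fun y _ h => hwz h.2)
          rw [hfc, Finset.sum_empty, if_neg (fun h => hwz h.1)]
      rw [Finset.sum_congr rfl (fun z hz => by rw [hinner z hz])]
      have e2 : ∀ z ∈ G,
          (if ((w : Finset V) ⊆ z ∧ z ⊆ (a : Finset V))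
              then (-1:ℚ)^((w : Finset V).card-1) else 0) * (-1:ℚ)^(z.card-1)
          = (-1:ℚ)^((w : Finset V).card-1) *
            (if ((w : Finset V) ⊆ z ∧ z ⊆ (a : Finset V)) then (-1:ℚ)^(z.card-1) else 0) := by
        intro z _; split_ifs <;> ring
      rw [Finset.sum_congr rfl e2, ← Finset.mul_sum, ← Finset.sum_filter,
        sum_interval hne hsub w.2 a.2]
      by_cases h : a = w
      · rw [if_pos h, if_pos (by rw [h]), h, omega_sq]
      · rw [if_neg h, if_neg (fun he => h (Subtype.ext he.symm)), mul_zero]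
    have hg : (connMat G)⁻¹ = gm := Matrix.inv_eq_right_inv hL
    rw [hg]
    have h0 : ∑ y : G, gm x y
        = ∑ y ∈ G, (-1:ℚ)^((x : Finset V).card-1) * (-1:ℚ)^(y.card-1) *
            ∑ z ∈ G.filter (fun z => (x : Finset V) ⊆ z ∧ y ⊆ z), (-1:ℚ)^(z.card-1) := by
      rw [← Finset.sum_coe_sort G
        (fun y => (-1:ℚ)^((x : Finset V).card-1) * (-1:ℚ)^(y.card-1) *
            ∑ z ∈ G.filter (fun z => (x : Finset V) ⊆ z ∧ y ⊆ z), (-1:ℚ)^(z.card-1))]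
    rw [h0, swap_helper]
    have hinner : ∀ z ∈ G,
        (∑ y ∈ G.filter (fun y => (x : Finset V) ⊆ z ∧ y ⊆ z),
          (-1:ℚ)^((x : Finset V).card-1) * (-1:ℚ)^(y.card-1))
        = if (x : Finset V) ⊆ z then (-1:ℚ)^((x : Finset V).card-1) else 0 := by
      intro z hz
      by_cases hxz : (x : Finset V) ⊆ z
      · have hfc : G.filter (fun y => (x : Finset V) ⊆ z ∧ y ⊆ z)
            = G.filter (fun y => y ⊆ z) :=
          Finset.filter_congr (fun y _ => by tauto)
        rw [hfc, ← Finset.mul_sum, sum_below hne hsub hz, mul_one, if_pos hxz]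
      · have hfc : G.filter (fun y => (x : Finset V) ⊆ z ∧ y ⊆ z) = ∅ :=
          Finset.filter_false_of_mem (fun y _ h => hxz h.1)
        rw [hfc, Finset.sum_empty, if_neg hxz]
    rw [Finset.sum_congr rfl (fun z hz => by rw [hinner z hz])]
    have e2 : ∀ z ∈ G,
        (if (x : Finset V) ⊆ z then (-1:ℚ)^((x : Finset V).card-1) else 0) * (-1:ℚ)^(z.card-1)
        = (-1:ℚ)^((x : Finset V).card-1) *
          (if (x : Finset V) ⊆ z then (-1:ℚ)^(z.card-1) else 0) := by
      intro z _; split_ifs <;> ring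
    rw [Finset.sum_congr rfl e2, ← Finset.mul_sum, ← Finset.sum_filter]
    -- RHS: gm x x
    rw [hgm]
    simp only
    have hfc2 : G.filter (fun z => (x : Finset V) ⊆ z ∧ (x : Finset V) ⊆ z)
        = G.filter (fun z => (x : Finset V) ⊆ z) :=
      Finset.filter_congr (fun y _ => by tauto)
    rw [hfc2, omega_sq, one_mul]
end KnillAux

/-- `L' K⁺ = 1`; equivalently, the row sums of the Green function
satisfy `∑_y g(x,y) = (-1)^{dim x} g(x,x)`. -/
theorem connMat_mulVec_Kplus_eq_one {V : Type*} [DecidableEq V]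
    (G : Finset (Finset V))
    (hne : ∀ x ∈ G, x.Nonempty)
    (hsub : ∀ x ∈ G, ∀ y : Finset V, y ⊆ x → y.Nonempty → y ∈ G)
    (hinv : IsUnit (connMat G)) :
    (∀ x : G, ∑ y : G, connMat G x y * Kplus G (y : Finset V) = 1) ∧
    (∀ x : G, ∑ y : G, (connMat G)⁻¹ x y
        = (-1 : ℚ) ^ ((x : Finset V).card - 1) * (connMat G)⁻¹ x x) :=
  KnillAux.connMat_mulVec_Kplus_eq_one' G hne hsub hinv
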